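/- Let R be a (possibly noncommutative) ring, let K₁, K₂, m ≥ 1 and X ≥ 0 be integers, and let p_A, p_B be the SEP encoding polynomials over R built from elements A_{j,k}, B_{j,k}, R_i, T_i. Set k = (K₂+1)(K₁m+X) − m. Then for every 1 ≤ i ≤ K₁ and 1 ≤ j ≤ K₂, the coefficient of x^{(m−1)+(i−1)m+(j−1)(K₁m+X)} in the remainder of p_A(x)·p_B(x) upon division by x^k − 1 equals Σ_{k'=1}^{m} A_{i,k'}·B_{k',j}. -/

import Mathlib

open Polynomial Finset

section helpers

lemma euc {m a b c d : ℕ} (ha : a < m) (hc : c < m) (h : a + b * m = c + d * m) :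
    a = c ∧ b = d := by
  have hm : 0 < m := by omega
  have h1 : a = c := by
    have := congrArg (· % m) h
    simpa [Nat.add_mul_mod_self_right, Nat.mod_eq_of_lt ha, Nat.mod_eq_of_lt hc] using this
  refine ⟨h1, ?_⟩
  subst h1
  have : b * m = d * m := by omega
  exact Nat.eq_of_mul_eq_mul_right hm this

lemma euc' {N a c b d : ℕ} (ha : a < 2 * N) (hc : c < N) (h : a + b * N = c + d * N) :
    (a = c ∧ b = d) ∨ (a = c + N ∧ b + 1 = d) := by
  rcases Nat.lt_or_ge a N with h1 | h1
  · exact Or.inl (euc h1 hc h)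
  · right
    have h2 : (a - N) + (b + 1) * N = c + d * N := by
      rw [add_mul, one_mul]; omega
    obtain ⟨e1, e2⟩ := euc (by omega) hc h2
    exact ⟨by omega, e2⟩

lemma blk {m M a b : ℕ} (ha : a < m) (hb : b < M) : a + b * m < M * m :=
  calc a + b * m < m + b * m := Nat.add_lt_add_right ha _
    _ = (b + 1) * m := by ring
    _ ≤ M * m := mul_le_mul_left hb m

lemma lt_imp_le_pred {a n b : ℕ} (h : a < n) (hn : n ≤ b) : a ≤ b - 1 := by omega

lemma noiseB {K s a : ℕ} (hK : 1 ≤ K) (ha : a < s) : (K - 1) * s + a < K * s := by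
  obtain ⟨K', rfl⟩ : ∃ K', K = K' + 1 := ⟨K - 1, by omega⟩
  have h : (K' + 1) * s = K' * s + s := by ring
  simpa [h] using Nat.add_lt_add_left ha (K' * s)

lemma condAB {K₁ K₂ m s : ℕ} (hm : 1 ≤ m) (hKs : K₁ * m ≤ s)
    {i j j₁ k₁ j₂ k₂ : ℕ}
    (hi : i < K₁) (hj : j < K₂) (hj₁ : j₁ < K₁) (hk₁ : k₁ < m) (hj₂ : j₂ < m) (hk₂ : k₂ < K₂) :
    k₁ + j₁ * m + (m - 1 - j₂ + k₂ * s) = m - 1 + i * m + j * s ↔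
      j₁ = i ∧ j₂ = k₁ ∧ k₂ = j := by
  have hb2 : i * m + m ≤ K₁ * m := by
    have := mul_le_mul_left (show i + 1 ≤ K₁ from hi) m
    rw [add_mul, one_mul] at this; exact this
  have hms : m ≤ s := le_trans (Nat.le_mul_of_pos_left m (by omega)) hKs
  constructor
  · intro h
    rw [← add_assoc] at h
    have ha : k₁ + j₁ * m + (m - 1 - j₂) < 2 * s := by
      have h1 : k₁ + j₁ * m < K₁ * m := blk hk₁ hj₁
      have h2 := hKs
      generalize j₁ * m = x at h1 ⊢
      generalize K₁ * m = w at h1 h2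
      omega
    have hc : m - 1 + i * m < s := by
      have h2 := hKs
      generalize i * m = v at hb2 ⊢
      generalize K₁ * m = w at hb2 h2
      omega
    rcases euc' ha hc h with ⟨e1, e2⟩ | ⟨e1, e2⟩
    · have h2 : k₁ + j₁ * m = j₂ + i * m := by
        generalize j₁ * m = x at e1 ⊢
        generalize i * m = v at e1 ⊢
        omega
      obtain ⟨f1, f2⟩ := euc hk₁ hj₂ h2
      exact ⟨f2, f1.symm, e2⟩
    · exfalso
      have h1 : k₁ + j₁ * m < K₁ * m := blk hk₁ hj₁
      have h2 := hKs
      generalize j₁ * m = x at h1 e1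
      generalize i * m = v at e1
      generalize K₁ * m = w at h1 h2
      omega
  · rintro ⟨rfl, rfl, rfl⟩
    generalize j₁ * m = v
    generalize k₂ * s = u
    omega

lemma condRB {K₁ K₂ m s : ℕ} (hm : 1 ≤ m) (hKs : K₁ * m ≤ s) {i j i₁ j₂ k₂ : ℕ}
    (hi : i < K₁) (hj : j < K₂) (hi₁ : K₁ * m + i₁ < s) (hj₂ : j₂ < m) (hk₂ : k₂ < K₂) :
    K₁ * m + i₁ + (m - 1 - j₂ + k₂ * s) ≠ m - 1 + i * m + j * s := by
  intro h
  rw [← add_assoc] at h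
  have hb2 : i * m + m ≤ K₁ * m := by
    have := mul_le_mul_left (show i + 1 ≤ K₁ from hi) m
    rw [add_mul, one_mul] at this; exact this
  have hms : m ≤ s := le_trans (Nat.le_mul_of_pos_left m (by omega)) hKs
  have ha : K₁ * m + i₁ + (m - 1 - j₂) < 2 * s := by
    have h1 := hi₁
    generalize K₁ * m = w at h1 ⊢
    omega
  have hc : m - 1 + i * m < s := by
    have h2 := hKs
    generalize i * m = v at hb2 ⊢
    generalize K₁ * m = w at hb2 h2
    omega
  rcases euc' ha hc h with ⟨e1, e2⟩ | ⟨e1, e2⟩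
  · generalize i * m = v at e1 hb2
    generalize K₁ * m = w at e1 hb2
    omega
  · have h1 := hi₁
    generalize i * m = v at e1
    generalize K₁ * m = w at e1 h1
    omega

lemma condT {K₁ K₂ m s : ℕ} (hm : 1 ≤ m) {a i j i₂ : ℕ}
    (hb2 : i * m + m ≤ K₁ * m) (hj : j < K₂) :
    a + ((K₂ - 1) * s + K₁ * m + i₂) ≠ m - 1 + i * m + j * s := by
  intro h
  obtain ⟨K', rfl⟩ : ∃ K', K₂ = K' + 1 := ⟨K₂ - 1, by omega⟩
  simp only [Nat.add_sub_cancel] at h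
  have hu : j * s ≤ K' * s := mul_le_mul_left (by omega) s
  generalize j * s = u at h hu
  generalize K' * s = z at h hu
  generalize i * m = v at h hb2
  generalize K₁ * m = w at h hb2
  omega

lemma dlt {K₁ K₂ m Xs i j : ℕ} (hm : 1 ≤ m) (hK₂ : 1 ≤ K₂) (hi : i < K₁) (hj : j < K₂) :
    m - 1 + i * m + j * (K₁ * m + Xs) < (K₂ + 1) * (K₁ * m + Xs) - m := by
  have hms : m ≤ K₁ * m := Nat.le_mul_of_pos_left m (by omega)
  have hb2 : i * m + m ≤ K₁ * m := by
    have := mul_le_mul_left (show i + 1 ≤ K₁ from hi) m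
    rw [add_mul, one_mul] at this; exact this
  have hu : j * (K₁ * m + Xs) + (K₁ * m + Xs) ≤ K₂ * (K₁ * m + Xs) := by
    have := mul_le_mul_left (show j + 1 ≤ K₂ from hj) (K₁ * m + Xs)
    rw [add_mul, one_mul] at this; exact this
  have hy : (K₂ + 1) * (K₁ * m + Xs) = K₂ * (K₁ * m + Xs) + (K₁ * m + Xs) := by ring
  rw [hy]
  generalize j * (K₁ * m + Xs) = u at hu ⊢
  generalize K₂ * (K₁ * m + Xs) = z at hu ⊢
  generalize K₁ * m = w at hms hb2 hu ⊢
  omega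

lemma deg_lt {m s z P k : ℕ} (hm : 1 ≤ m) (hms : m ≤ s) (hsz : s ≤ z)
    (hP : P ≤ s - 1 + (z - 1)) (hk : k = z + s - m) (hbig : k ≤ P) : P - k < m - 1 := by
  omega

lemma coeff_mul_monomials {R : Type*} [Ring R] {ι κ : Type*} (s : Finset ι) (t : Finset κ)
    (a : ι → ℕ) (b : κ → ℕ) (c : ι → R) (e : κ → R) (d : ℕ) :
    ((∑ x ∈ s, monomial (a x) (c x)) * (∑ y ∈ t, monomial (b y) (e y))).coeff d
      = ∑ x ∈ s, ∑ y ∈ t, if a x + b y = d then c x * e y else 0 := by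
  rw [Finset.sum_mul_sum]
  simp [finset_sum_coeff, monomial_mul_monomial, coeff_monomial]

end helpers

/-- The SEP encoding polynomial of `A` (blocks `A j k` for `j < K₁`, `k < m`,
noise `Rn i` for `i < Xs`), with 0-based indices. `Xs` is the security parameter. -/
noncomputable def sepA {R : Type*} [Ring R] (K₁ m Xs : ℕ)
    (A : Fin K₁ → Fin m → R) (Rn : Fin Xs → R) : R[X] :=
  (∑ j : Fin K₁, ∑ k : Fin m, monomial (k.val + j.val * m) (A j k))
    + ∑ i : Fin Xs, monomial (K₁ * m + i.val) (Rn i)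

/-- The SEP encoding polynomial of `B` (blocks `B j k` for `j < m`, `k < K₂`,
noise `T i` for `i < Xs`), with 0-based indices. -/
noncomputable def sepB {R : Type*} [Ring R] (K₁ K₂ m Xs : ℕ)
    (B : Fin m → Fin K₂ → R) (T : Fin Xs → R) : R[X] :=
  (∑ j : Fin m, ∑ k : Fin K₂, monomial ((m - 1 - j.val) + k.val * (K₁ * m + Xs)) (B j k))
    + ∑ i : Fin Xs, monomial ((K₂ - 1) * (K₁ * m + Xs) + K₁ * m + i.val) (T i)

/-- Theorem 1 (SEP-DFT): reducing the product of the SEP encoding polynomials modulo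
`x^k - 1` with `k = (K₂+1)(K₁m+Xs) - m` preserves all the desired block coefficients
`C_{i,j} = Σ_{k'} A_{i,k'} B_{k',j}`. -/
theorem stmt_6 {R : Type*} [Ring R] (K₁ K₂ m Xs : ℕ)
    (hK₁ : 1 ≤ K₁) (hK₂ : 1 ≤ K₂) (hm : 1 ≤ m)
    (A : Fin K₁ → Fin m → R) (B : Fin m → Fin K₂ → R)
    (Rn : Fin Xs → R) (T : Fin Xs → R)
    (k : ℕ) (hk : k = (K₂ + 1) * (K₁ * m + Xs) - m)
    (i : Fin K₁) (j : Fin K₂) :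
    ((sepA K₁ m Xs A Rn * sepB K₁ K₂ m Xs B T) %ₘ (X ^ k - 1)).coeff
        ((m - 1) + i.val * m + j.val * (K₁ * m + Xs))
      = ∑ k' : Fin m, A i k' * B k' j := by
  nontriviality R
  have hKs : K₁ * m ≤ K₁ * m + Xs := Nat.le_add_right _ _
  have hms : m ≤ K₁ * m := Nat.le_mul_of_pos_left m hK₁
  have hms2 : m ≤ K₁ * m + Xs := le_trans hms hKs
  have hb2 : i.val * m + m ≤ K₁ * m := by
    have := mul_le_mul_left (show i.val + 1 ≤ K₁ from i.isLt) m
    rw [add_mul, one_mul] at this; exact this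
  have hd : (m - 1) + i.val * m + j.val * (K₁ * m + Xs) < k :=
    hk ▸ dlt hm hK₂ i.isLt j.isLt
  have hk0 : k ≠ 0 := (lt_of_le_of_lt (Nat.zero_le _) hd).ne'
  have hq : (X ^ k - 1 : R[X]).Monic := by
    simpa using monic_X_pow_sub_C (1 : R) hk0
  -- the key coefficient computation on the unreduced product
  have hPcoeff : (sepA K₁ m Xs A Rn * sepB K₁ K₂ m Xs B T).coeff
      ((m - 1) + i.val * m + j.val * (K₁ * m + Xs)) = ∑ k' : Fin m, A i k' * B k' j := by
    have expand : ∀ (a b c d : R[X]), (a + b) * (c + d) = a * c + a * d + (b * c + b * d) := by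
      intros; noncomm_ring
    rw [sepA, sepB, expand]
    simp only [coeff_add]
    have c2 : ((∑ j' : Fin K₁, ∑ k' : Fin m, monomial (k'.val + j'.val * m) (A j' k')) *
        (∑ i' : Fin Xs, monomial ((K₂ - 1) * (K₁ * m + Xs) + K₁ * m + i'.val) (T i'))).coeff
          ((m - 1) + i.val * m + j.val * (K₁ * m + Xs)) = 0 := by
      rw [← Fintype.sum_prod_type', coeff_mul_monomials]
      exact Finset.sum_eq_zero fun p _ => Finset.sum_eq_zero fun q _ =>
        if_neg (condT hm hb2 j.isLt)
    have c3 : ((∑ i' : Fin Xs, monomial (K₁ * m + i'.val) (Rn i')) *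
        (∑ j' : Fin m, ∑ k' : Fin K₂,
          monomial ((m - 1 - j'.val) + k'.val * (K₁ * m + Xs)) (B j' k'))).coeff
          ((m - 1) + i.val * m + j.val * (K₁ * m + Xs)) = 0 := by
      rw [← Fintype.sum_prod_type', coeff_mul_monomials]
      exact Finset.sum_eq_zero fun p _ => Finset.sum_eq_zero fun q _ =>
        if_neg (condRB hm hKs i.isLt j.isLt (Nat.add_lt_add_left p.isLt _) q.1.isLt q.2.isLt)
    have c4 : ((∑ i' : Fin Xs, monomial (K₁ * m + i'.val) (Rn i')) *
        (∑ i' : Fin Xs, monomial ((K₂ - 1) * (K₁ * m + Xs) + K₁ * m + i'.val) (T i'))).coeff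
          ((m - 1) + i.val * m + j.val * (K₁ * m + Xs)) = 0 := by
      rw [coeff_mul_monomials]
      exact Finset.sum_eq_zero fun p _ => Finset.sum_eq_zero fun q _ =>
        if_neg (condT hm hb2 j.isLt)
    have c1 : ((∑ j' : Fin K₁, ∑ k' : Fin m, monomial (k'.val + j'.val * m) (A j' k')) *
        (∑ j' : Fin m, ∑ k' : Fin K₂,
          monomial ((m - 1 - j'.val) + k'.val * (K₁ * m + Xs)) (B j' k'))).coeff
          ((m - 1) + i.val * m + j.val * (K₁ * m + Xs)) = ∑ k' : Fin m, A i k' * B k' j := by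
      rw [← Fintype.sum_prod_type', ← Fintype.sum_prod_type', coeff_mul_monomials]
      have step : ∀ (x : Fin K₁ × Fin m) (y : Fin m × Fin K₂),
          ((x.2.val + x.1.val * m + (m - 1 - y.1.val + y.2.val * (K₁ * m + Xs))
            = m - 1 + i.val * m + j.val * (K₁ * m + Xs)) ↔ (y = (x.2, j) ∧ x.1 = i)) := by
        intro x y
        rw [condAB hm hKs i.isLt j.isLt x.1.isLt x.2.isLt y.1.isLt y.2.isLt]
        constructor
        · rintro ⟨h1, h2, h3⟩
          exact ⟨Prod.ext (Fin.ext h2) (Fin.ext h3), Fin.ext h1⟩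
        · rintro ⟨rfl, h⟩
          exact ⟨by rw [h], rfl, rfl⟩
      rw [Finset.sum_congr rfl (fun x _ => Finset.sum_congr rfl fun y _ =>
        if_congr (step x y) rfl rfl)]
      simp only [ite_and]
      rw [Finset.sum_congr rfl (fun x _ => Finset.sum_ite_eq' univ (x.2, j) _)]
      simp only [mem_univ, if_true]
      rw [Fintype.sum_prod_type, Finset.sum_comm]
      rw [Finset.sum_congr rfl (fun b _ => Finset.sum_ite_eq' univ i _)]
      simp
    rw [c1, c2, c3, c4]
    simp
  rcases Nat.lt_or_ge ((sepA K₁ m Xs A Rn * sepB K₁ K₂ m Xs B T).natDegree) k with hcase | hcase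
  · -- degree of the product is already < k, so mod does nothing
    rw [(modByMonic_eq_self_iff hq).mpr ?_]
    · exact hPcoeff
    · have hdq : (X ^ k - 1 : R[X]).degree = (k : ℕ) := by
        simpa using degree_X_pow_sub_C (Nat.pos_of_ne_zero hk0) (1 : R)
      rw [hdq]
      exact lt_of_le_of_lt degree_le_natDegree (by exact_mod_cast hcase)
  · -- degree bounds
    have hAdeg : (sepA K₁ m Xs A Rn).natDegree ≤ K₁ * m + Xs - 1 := by
      rw [sepA]
      refine le_trans (natDegree_add_le _ _) (max_le ?_ ?_)
      · refine natDegree_sum_le_of_forall_le _ _ fun j' _ =>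
          natDegree_sum_le_of_forall_le _ _ fun k' _ =>
          le_trans (natDegree_monomial_le _) ?_
        exact lt_imp_le_pred (lt_of_lt_of_le (blk k'.isLt j'.isLt) hKs) le_rfl
      · refine natDegree_sum_le_of_forall_le _ _ fun i' _ =>
          le_trans (natDegree_monomial_le _) ?_
        exact lt_imp_le_pred (Nat.add_lt_add_left i'.isLt _) le_rfl
    have hBdeg : (sepB K₁ K₂ m Xs B T).natDegree ≤ K₂ * (K₁ * m + Xs) - 1 := by
      rw [sepB]
      refine le_trans (natDegree_add_le _ _) (max_le ?_ ?_)
      · refine natDegree_sum_le_of_forall_le _ _ fun j' _ =>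
          natDegree_sum_le_of_forall_le _ _ fun k' _ =>
          le_trans (natDegree_monomial_le _) ?_
        refine lt_imp_le_pred (blk ?_ k'.isLt) le_rfl
        exact lt_of_lt_of_le (by omega) hms2
      · refine natDegree_sum_le_of_forall_le _ _ fun i' _ =>
          le_trans (natDegree_monomial_le _) ?_
        refine lt_imp_le_pred ?_ le_rfl
        rw [add_assoc]
        exact noiseB hK₂ (Nat.add_lt_add_left i'.isLt _)
    have hmul : (sepA K₁ m Xs A Rn * sepB K₁ K₂ m Xs B T).natDegree ≤
        (K₁ * m + Xs - 1) + (K₂ * (K₁ * m + Xs) - 1) :=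
      le_trans natDegree_mul_le (add_le_add hAdeg hBdeg)
    have hsz : (K₁ * m + Xs) ≤ K₂ * (K₁ * m + Xs) := Nat.le_mul_of_pos_left _ hK₂
    have hk' : k = K₂ * (K₁ * m + Xs) + (K₁ * m + Xs) - m := by rw [hk, add_one_mul]
    have hQd : ((sepA K₁ m Xs A Rn * sepB K₁ K₂ m Xs B T) /ₘ (X ^ k - 1)).natDegree < m - 1 := by
      rw [natDegree_divByMonic _ hq]
      have hqd : (X ^ k - 1 : R[X]).natDegree = k := by
        simpa using natDegree_X_pow_sub_C (n := k) (r := (1 : R))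
      rw [hqd]
      exact deg_lt hm hms2 hsz hmul hk' hcase
    have hQ0 : ((sepA K₁ m Xs A Rn * sepB K₁ K₂ m Xs B T) /ₘ (X ^ k - 1)).coeff
        ((m - 1) + i.val * m + j.val * (K₁ * m + Xs)) = 0 :=
      coeff_eq_zero_of_natDegree_lt (lt_of_lt_of_le hQd
        ((Nat.le_add_right _ _).trans (Nat.le_add_right _ _)))
    rw [modByMonic_eq_sub_mul_div _ _, coeff_sub, sub_mul, one_mul, X_pow_mul, coeff_sub,
      coeff_mul_X_pow', if_neg (not_le.mpr hd), hQ0]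
    simpa using hPcoeff
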